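/- If X is a sequentially p-compact space for a free ultrafilter p on ℕ, then X^ω is sequentially p-compact. -/

import Mathlib

open Set Filter Topology Function

/-- A free ultrafilter on ℕ: one containing no singleton. -/
def FreeUF (p : Ultrafilter ℕ) : Prop := ∀ n : ℕ, ({n} : Set ℕ) ∉ p

/-- `l` is the `p`-limit of the sequence `x`. -/
def PLim {X : Type*} [TopologicalSpace X] (p : Ultrafilter ℕ) (x : ℕ → X) (l : X) : Prop :=
  Filter.Tendsto x (p : Filter ℕ) (nhds l)

/-- A βω-space: the closure of any countably infinite discrete subset with compact closure
is homeomorphic to βℕ. -/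
def BetaOmegaSpace (X : Type*) [TopologicalSpace X] : Prop :=
  ∀ M : Set X, M.Countable → M.Infinite → DiscreteTopology M → IsCompact (closure M) →
    Nonempty (closure M ≃ₜ StoneCech ℕ)

/-- Keisler–Rudin (Rudin–Keisler) order on ultrafilters on ℕ. -/
def RKle (p q : Ultrafilter ℕ) : Prop := ∃ f : ℕ → ℕ, Ultrafilter.map f q = p

/-- A homogeneous space. -/
def Homogeneous (X : Type*) [TopologicalSpace X] : Prop :=
  ∀ x y : X, ∃ h : X ≃ₜ X, h x = y

/-- Sequential `p`-compactness: every infinite set has an infinite subset all of whose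
injective sequences have `p`-limits. -/
def SeqPCompact (p : Ultrafilter ℕ) (X : Type*) [TopologicalSpace X] : Prop :=
  ∀ M : Set X, M.Infinite → ∃ L : Set X, L ⊆ M ∧ L.Infinite ∧
    ∀ x : ℕ → X, Function.Injective x → (∀ n, x n ∈ L) → ∃ l : X, PLim p x l

-- helper: split an infinite set
lemma infinite_split {α : Type*} {s : Set α} (hs : s.Infinite) :
    ∃ t ⊆ s, t.Infinite ∧ (s \ t).Infinite := by
  obtain ⟨e⟩ : Nonempty (ℕ ↪ s) := ⟨hs.natEmbedding⟩
  refine ⟨Set.range (fun i => (e (2 * i) : α)), ?_, ?_, ?_⟩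
  · rintro _ ⟨i, rfl⟩; exact (e (2 * i)).2
  · apply Set.infinite_range_of_injective
    intro a b hab
    have := e.injective (Subtype.ext hab)
    omega
  · apply Set.Infinite.mono (s := Set.range (fun i => (e (2 * i + 1) : α)))
    swap
    · apply Set.infinite_range_of_injective
      intro a b hab
      have := e.injective (Subtype.ext hab)
      omega
    rintro _ ⟨i, rfl⟩
    refine ⟨(e (2 * i + 1)).2, ?_⟩
    rintro ⟨j, hj⟩
    have := e.injective (Subtype.ext hj)
    omega


/-- Sequential `p`-compactness is preserved by countable powers. -/
theorem stmt_12 {X : Type*} [TopologicalSpace X] (p : Ultrafilter ℕ) (hfree : FreeUF p)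
    (hX : SeqPCompact p X) : SeqPCompact p (ℕ → X) := by
  have hpc : (p : Filter ℕ) ≤ cofinite := by
    rcases p.le_cofinite_or_eq_pure with h | ⟨a, ha⟩
    · exact h
    · exact absurd (by rw [ha]; exact rfl : ({a} : Set ℕ) ∈ p) (hfree a)
  have hpmem : ∀ s : Set ℕ, sᶜ.Finite → s ∈ p := fun s hs =>
    hpc (mem_cofinite.mpr hs)
  intro M hM
  obtain ⟨emb⟩ : Nonempty (ℕ ↪ M) := ⟨hM.natEmbedding⟩
  set f : ℕ → (ℕ → X) := fun k => (emb k : ℕ → X) with hf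
  have hf_inj : Function.Injective f := fun a b h => emb.injective (Subtype.ext h)
  have hf_mem : ∀ k, f k ∈ M := fun k => (emb k).2
  -- the "good" property
  set Good : Set X → Prop := fun L =>
    ∀ x : ℕ → X, Function.Injective x → (∀ n, x n ∈ L) → ∃ l : X, PLim p x l with hGoodDef
  -- property for coordinate n on index set A
  set P : ℕ → Set ℕ → Prop := fun n A =>
    (∃ v, ∀ j ∈ A, f j n = v) ∨
    (Set.InjOn (fun j => f j n) A ∧ ∃ L₁ L₂ : Set X, Disjoint L₁ L₂ ∧ L₂.Infinite ∧
      Good (L₁ ∪ L₂) ∧ ∀ j ∈ A, f j n ∈ L₁) with hPdef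
  -- step lemma
  have step : ∀ (n : ℕ) (A : Set ℕ), A.Infinite → ∃ B, B ⊆ A ∧ B.Infinite ∧ P n B := by
    intro n A hA
    set g : ℕ → X := fun j => f j n with hg
    by_cases hconst : ∃ v, (A ∩ g ⁻¹' {v}).Infinite
    · obtain ⟨v, hv⟩ := hconst
      refine ⟨A ∩ g ⁻¹' {v}, inter_subset_left, hv, Or.inl ⟨v, ?_⟩⟩
      rintro j ⟨-, hj⟩; exact hj
    · push_neg at hconst
      have himg : (g '' A).Infinite := by
        intro hfin
        apply hA
        have : A ⊆ ⋃ v ∈ g '' A, A ∩ g ⁻¹' {v} := by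
          intro j hj
          exact Set.mem_biUnion ⟨j, hj, rfl⟩ ⟨hj, rfl⟩
        exact Set.Finite.subset (hfin.biUnion (fun v _ => hconst v)) this
      obtain ⟨L, hLsub, hLinf, hLgood⟩ := hX (g '' A) himg
      obtain ⟨L₁, hL₁sub, hL₁inf, hL₂inf⟩ := infinite_split hLinf
      have hpre : ∀ v : X, v ∈ L₁ → ∃ j, j ∈ A ∧ g j = v := by
        intro v hv
        obtain ⟨j, hj, hjv⟩ := hLsub (hL₁sub hv)
        exact ⟨j, hj, hjv⟩
      choose c hcA hcg using hpre
      classical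
      set B : Set ℕ := (fun v : L₁ => c v v.2) '' Set.univ with hB
      have hBsub : B ⊆ A := by rintro _ ⟨v, -, rfl⟩; exact hcA _ _
      have hBval : ∀ j ∈ B, g j ∈ L₁ := by
        rintro _ ⟨v, -, rfl⟩; rw [hcg]; exact v.2
      have hBinjOn : Set.InjOn g B := by
        rintro _ ⟨v, -, rfl⟩ _ ⟨w, -, rfl⟩ h
        rw [hcg, hcg] at h
        rw [Subtype.ext h]
      refine ⟨B, hBsub, ?_, Or.inr ⟨hBinjOn, L₁, L \ L₁, Set.disjoint_sdiff_right, hL₂inf, ?_, hBval⟩⟩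
      · haveI := hL₁inf.to_subtype
        have : Function.Injective (fun v : L₁ => c v v.2) := by
          intro v w h
          have : g (c v v.2) = g (c w w.2) := congrArg g h
          rw [hcg, hcg] at this
          exact Subtype.ext this
        rw [hB, Set.image_univ]
        exact Set.infinite_range_of_injective this
      · rw [Set.union_diff_cancel hL₁sub]
        exact hLgood
  -- choice function for the step
  choose st hst1 hst2 hst3 using step
  -- recursive construction of nested index sets
  let G : ℕ → {A : Set ℕ // A.Infinite} := fun n =>
    Nat.rec ⟨st 0 Set.univ Set.infinite_univ, hst2 0 Set.univ Set.infinite_univ⟩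
      (fun m ih => ⟨st (m + 1) ih.1 ih.2, hst2 (m + 1) ih.1 ih.2⟩) n
  have hGP : ∀ n, P n (G n).1 := by
    intro n
    cases n with
    | zero => exact hst3 0 Set.univ Set.infinite_univ
    | succ m => exact hst3 (m + 1) (G m).1 (G m).2
  have hGsucc : ∀ n, (G (n + 1)).1 ⊆ (G n).1 := fun n => hst1 (n + 1) (G n).1 (G n).2
  have hGmono : ∀ {m j : ℕ}, m ≤ j → (G j).1 ⊆ (G m).1 := by
    intro m j h
    induction j with
    | zero => rw [Nat.le_zero.mp h]
    | succ i ih =>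
      rcases Nat.lt_or_ge m (i + 1) with h' | h'
      · exact (hGsucc i).trans (ih (Nat.lt_succ_iff.mp h'))
      · rw [Nat.le_antisymm h h']
  -- diagonal sequence
  have hex : ∀ (a n : ℕ), ∃ b ∈ (G n).1, a < b := fun a n => (G n).2.exists_gt a
  choose bf hbf1 hbf2 using hex
  let k : ℕ → ℕ := fun n => Nat.rec (bf 0 0) (fun m ih => bf ih (m + 1)) n
  have hkG : ∀ n, k n ∈ (G n).1 := by
    intro n
    cases n with
    | zero => exact hbf1 0 0
    | succ m => exact hbf1 (k m) (m + 1)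
  have hkmono : StrictMono k := by
    apply strictMono_nat_of_lt_succ
    intro n
    exact hbf2 (k n) (n + 1)
  -- the final set
  refine ⟨Set.range (fun j => f (k j)), ?_, ?_, ?_⟩
  · rintro _ ⟨j, rfl⟩; exact hf_mem _
  · exact Set.infinite_range_of_injective (hf_inj.comp hkmono.injective)
  · intro x hxinj hxL
    have hidx : ∀ m, ∃ j, f (k j) = x m := fun m => hxL m
    choose idx hidx using hidx
    have key : ∀ n, ∃ l : X, Tendsto (fun m => x m n) (p : Filter ℕ) (nhds l) := by
      intro n
      have hbad : {m | idx m < n}.Finite := by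
        have hsub : {m | idx m < n} ⊆ x ⁻¹' ((fun j => f (k j)) '' Set.Iio n) := by
          intro m hm
          exact ⟨idx m, hm, hidx m⟩
        exact Set.Finite.preimage (Set.injOn_of_injective hxinj)
          ((Set.finite_Iio n).image _) |>.subset hsub
      have hC : {m | n ≤ idx m} ∈ p := by
        apply hpmem
        apply hbad.subset
        intro m hm
        simpa using hm
      have hkin : ∀ m, n ≤ idx m → k (idx m) ∈ (G n).1 := fun m hm =>
        hGmono hm (hkG (idx m))
      rcases hGP n with ⟨v, hv⟩ | ⟨hinjOn, L₁, L₂, hdisj, hL₂inf, hGoodL, hval⟩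
      · refine ⟨v, Tendsto.congr' ?_ tendsto_const_nhds⟩
        filter_upwards [hC] with m hm
        rw [← hidx m]
        exact (hv _ (hkin m hm)).symm
      · classical
        obtain ⟨e⟩ : Nonempty (ℕ ↪ L₂) := ⟨hL₂inf.natEmbedding⟩
        set z : ℕ → X := fun m => if n ≤ idx m then x m n else (e m : X) with hz
        have hzval : ∀ m, z m ∈ L₁ ∪ L₂ := by
          intro m
          by_cases h : n ≤ idx m
          · left
            rw [hz]; simp only [if_pos h]
            rw [← hidx m]
            exact hval _ (hkin m h)
          · right
            rw [hz]; simp only [if_neg h]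
            exact (e m).2
        have hzinj : Function.Injective z := by
          intro a b hab
          by_contra hne
          by_cases ha : n ≤ idx a <;> by_cases hb : n ≤ idx b
          · rw [hz] at hab; simp only [if_pos ha, if_pos hb] at hab
            rw [← hidx a, ← hidx b] at hab
            have hk : k (idx a) = k (idx b) := hinjOn (hkin a ha) (hkin b hb) hab
            have : idx a = idx b := hkmono.injective hk
            exact hne (hxinj (by rw [← hidx a, ← hidx b, this]))
          · rw [hz] at hab; simp only [if_pos ha, if_neg hb] at hab
            have h1 : x a n ∈ L₁ := by rw [← hidx a]; exact hval _ (hkin a ha)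
            have h2 : (e b : X) ∈ L₂ := (e b).2
            rw [hab] at h1
            exact (Set.disjoint_left.mp hdisj h1) h2
          · rw [hz] at hab; simp only [if_neg ha, if_pos hb] at hab
            have h1 : x b n ∈ L₁ := by rw [← hidx b]; exact hval _ (hkin b hb)
            have h2 : (e a : X) ∈ L₂ := (e a).2
            rw [← hab] at h1
            exact (Set.disjoint_left.mp hdisj h1) h2
          · rw [hz] at hab; simp only [if_neg ha, if_neg hb] at hab
            exact hne (e.injective (Subtype.ext hab))
        obtain ⟨l, hl⟩ := hGoodL z hzinj hzval
        refine ⟨l, Tendsto.congr' ?_ hl⟩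
        filter_upwards [hC] with m hm
        rw [hz]; simp [if_pos hm]
    choose l hl using key
    exact ⟨l, tendsto_pi_nhds.mpr hl⟩
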